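/- Let A be a regular closed subspace of a Tychonoff space X (i.e., A is the closure of an open set). Then cl_{βX} A ⊆ υX if and only if A is pseudocompact. -/

import Mathlib

/-- A space is pseudocompact if every continuous real-valued function on it is bounded. -/
def IsPseudocompactSpace (Y : Type) [TopologicalSpace Y] : Prop :=
  ∀ f : Y → ℝ, Continuous f → ∃ M : ℝ, ∀ y : Y, |f y| ≤ M

def hewitt (X : Type) [TopologicalSpace X] : Set (StoneCech X) :=
  ⋂₀ {C : Set (StoneCech X) |
      (∃ f : StoneCech X → ℝ, Continuous f ∧ C = {x | f x ≠ 0}) ∧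
        Set.range (stoneCechUnit : X → StoneCech X) ⊆ C}

open Set

/-- Easy direction: pseudocompactness of `A` implies `cl_{βX} A ⊆ υX`. -/
lemma aux_easy (X : Type) [TopologicalSpace X] [T35Space X] (A : Set X)
    (hps : IsPseudocompactSpace A) :
    closure (stoneCechUnit '' A) ⊆ hewitt X := by
  rcases A.eq_empty_or_nonempty with hAe | hAne
  · simp [hAe]
  intro p hp
  rw [hewitt, Set.mem_sInter]
  rintro C ⟨⟨F, hFc, rfl⟩, hrange⟩
  by_contra hpC
  simp only [mem_setOf_eq, not_not] at hpC
  -- F (stoneCechUnit z) ≠ 0 for all z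
  have hne : ∀ z : X, F (stoneCechUnit z) ≠ 0 := fun z =>
    hrange ⟨z, rfl⟩
  -- h : A → ℝ, h a = |F (ι a)|⁻¹ is continuous
  have hcont : Continuous fun a : A => |F (stoneCechUnit (a : X))|⁻¹ := by
    apply Continuous.inv₀
    · exact (hFc.comp (continuous_stoneCechUnit.comp continuous_subtype_val)).abs
    · intro a
      simpa [abs_eq_zero] using hne (a : X)
  obtain ⟨M, hM⟩ := hps _ hcont
  obtain ⟨a0⟩ := hAne.to_subtype
  have hpos : ∀ a : A, 0 < |F (stoneCechUnit (a : X))| := fun a =>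
    abs_pos.mpr (hne _)
  have hMpos : 0 < M :=
    lt_of_lt_of_le (inv_pos.mpr (hpos a0)) ((le_abs_self _).trans (hM a0))
  -- so |F (ι a)| ≥ M⁻¹ for all a ∈ A
  have hlb : ∀ a : A, M⁻¹ ≤ |F (stoneCechUnit (a : X))| := by
    intro a
    have h1 : |F (stoneCechUnit (a : X))|⁻¹ ≤ M :=
      (le_abs_self _).trans (hM a)
    simpa using inv_anti₀ (inv_pos.mpr (hpos a)) h1
  -- but p ∈ closure (ι '' A) and |F p| = 0 < M⁻¹
  have hopen : IsOpen {q : StoneCech X | |F q| < M⁻¹} :=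
    isOpen_lt hFc.abs continuous_const
  have hmem : p ∈ {q : StoneCech X | |F q| < M⁻¹} := by
    simp [hpC, hMpos]
  obtain ⟨q, hq1, hq2⟩ := mem_closure_iff.mp hp _ hopen hmem
  obtain ⟨a, haA, rfl⟩ := hq2
  exact absurd (hlb ⟨a, haA⟩) (not_le.mpr hq1)

/-- Hard direction: if `cl_{βX} (cl U) ⊆ υX` for `U` open, then `cl U` is pseudocompact. -/
lemma aux_hard (X : Type) [TopologicalSpace X] [T35Space X] (U : Set X) (hU : IsOpen U)
    (hsub : closure (stoneCechUnit '' closure U) ⊆ hewitt X) :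
    IsPseudocompactSpace (closure U) := by
  intro f hf
  by_contra hbd
  push_neg at hbd
  have hUA : U ⊆ closure U := subset_closure
  -- Step 1: points xₙ ∈ U and open Oₙ ⊆ U on which |f| > n
  have key : ∀ n : ℕ, ∃ (O : Set X) (x : X), IsOpen O ∧ O ⊆ U ∧ x ∈ O ∧
      ∀ y : closure U, (y : X) ∈ O → (n : ℝ) < |f y| := by
    intro n
    have hopen : IsOpen {a : closure U | (n : ℝ) < |f a|} := isOpen_lt continuous_const hf.abs
    obtain ⟨G, hG, hGeq⟩ := isOpen_induced_iff.mp hopen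
    obtain ⟨a, ha⟩ := hbd n
    have haG : (a : X) ∈ G := by
      have h : a ∈ Subtype.val ⁻¹' G := by rw [hGeq]; exact ha
      exact h
    have haU : (a : X) ∈ closure U := a.2
    obtain ⟨x, hxG, hxU⟩ := mem_closure_iff.mp haU G hG haG
    refine ⟨G ∩ U, x, hG.inter hU, inter_subset_right, ⟨hxG, hxU⟩, ?_⟩
    intro y hy
    have : y ∈ Subtype.val ⁻¹' G := hy.1
    rw [hGeq] at this
    exact this
  choose O x hOopen hOU hxO hOlt using key
  have hxU : ∀ n, x n ∈ U := fun n => hOU n (hxO n)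
  -- Step 2: the family O is locally finite
  have hlf : LocallyFinite O := by
    intro z
    by_cases hz : z ∈ closure U
    · have hopen : IsOpen {a : closure U | |f a| < |f ⟨z, hz⟩| + 1} :=
        isOpen_lt hf.abs continuous_const
      obtain ⟨G, hG, hGeq⟩ := isOpen_induced_iff.mp hopen
      have hzG : z ∈ G := by
        have : (⟨z, hz⟩ : closure U) ∈ Subtype.val ⁻¹' G := by
          rw [hGeq]; simp only [mem_setOf_eq]; linarith
        exact this
      refine ⟨G, hG.mem_nhds hzG, ?_⟩
      have hss : {n | (O n ∩ G).Nonempty} ⊆ Iio (⌈|f ⟨z, hz⟩| + 1⌉₊) := by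
        rintro n ⟨y, hyO, hyG⟩
        have hyA : y ∈ closure U := hUA (hOU n hyO)
        have h1 : (n : ℝ) < |f ⟨y, hyA⟩| := hOlt n ⟨y, hyA⟩ hyO
        have h2 : |f ⟨y, hyA⟩| < |f ⟨z, hz⟩| + 1 := by
          have : (⟨y, hyA⟩ : closure U) ∈ Subtype.val ⁻¹' G := hyG
          rw [hGeq] at this
          exact this
        have : (n : ℝ) < |f ⟨z, hz⟩| + 1 := h1.trans h2
        exact Nat.lt_ceil.mpr this
      exact (Set.finite_Iio _).subset hss
    · refine ⟨(closure U)ᶜ, (isClosed_closure.isOpen_compl).mem_nhds hz, ?_⟩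
      have : {n | (O n ∩ (closure U)ᶜ).Nonempty} = ∅ := by
        ext n
        simp only [mem_setOf_eq, mem_empty_iff_false, iff_false]
        rintro ⟨y, hyO, hyc⟩
        exact hyc (hUA (hOU n hyO))
      rw [this]; exact finite_empty
  -- Step 3: bump functions
  have bump : ∀ n : ℕ, ∃ φ : X → ℝ, Continuous φ ∧ φ (x n) = 1 ∧
      (∀ y, 0 ≤ φ y ∧ φ y ≤ 1) ∧ ∀ y, y ∉ O n → φ y = 0 := by
    intro n
    obtain ⟨q, hqc, hqx, hqK⟩ := CompletelyRegularSpace.completely_regular (x n) (O n)ᶜ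
      (hOopen n).isClosed_compl (by simp [hxO n])
    refine ⟨fun y => 1 - (q y : ℝ),
      continuous_const.sub (continuous_subtype_val.comp hqc), by simp [hqx], ?_, ?_⟩
    · intro y
      have h1 : (0 : ℝ) ≤ (q y : ℝ) := (q y).2.1
      have h2 : ((q y : ℝ)) ≤ 1 := (q y).2.2
      constructor <;> simp only [sub_nonneg, sub_le_self_iff] <;> linarith
    · intro y hy
      have hq1 : q y = 1 := hqK hy
      simp [hq1]
  choose φ hφc hφx hφ01 hφ0 using bump
  -- Step 4: g = ∑ n • φₙ is continuous, nonneg, and g (x m) ≥ m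
  have hsupp : ∀ n : ℕ, (Function.support fun z => (n : ℝ) * φ n z) ⊆ O n := by
    intro n z hz
    by_contra hzO
    exact hz (by simp [hφ0 n z hzO])
  set g : X → ℝ := fun z => ∑ᶠ n : ℕ, (n : ℝ) * φ n z with hg
  have hgc : Continuous g :=
    continuous_finsum (fun n => continuous_const.mul (hφc n)) (hlf.subset hsupp)
  have hterm_nonneg : ∀ (n : ℕ) (z : X), 0 ≤ (n : ℝ) * φ n z := fun n z =>
    mul_nonneg (Nat.cast_nonneg n) (hφ01 n z).1
  have hg0 : ∀ z, 0 ≤ g z := fun z => finsum_nonneg fun n => hterm_nonneg n z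
  have hgx : ∀ m : ℕ, (m : ℝ) ≤ g (x m) := by
    intro m
    have hfin : (Function.support fun n : ℕ => (n : ℝ) * φ n (x m)).Finite :=
      ((hlf.point_finite (x m)).subset (fun n hn => hsupp n hn))
    have h1 : (m : ℝ) * φ m (x m) ≤ g (x m) :=
      single_le_finsum m hfin (fun n => hterm_nonneg n (x m))
    rwa [hφx m, mul_one] at h1
  -- Step 5: extend (1 + g)⁻¹ to βX
  have hpos : ∀ z, (0 : ℝ) < 1 + g z := fun z => by linarith [hg0 z]
  have hmem : ∀ z, (1 + g z)⁻¹ ∈ Icc (0 : ℝ) 1 := by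
    intro z
    constructor
    · exact inv_nonneg.mpr (hpos z).le
    · have h1 : (1 : ℝ) ≤ 1 + g z := by linarith [hg0 z]
      simpa using inv_anti₀ one_pos h1
  set h : X → Icc (0 : ℝ) 1 := fun z => ⟨(1 + g z)⁻¹, hmem z⟩ with hh
  have hhc : Continuous h :=
    Continuous.subtype_mk ((continuous_const.add hgc).inv₀ fun z => (hpos z).ne') _
  set F : StoneCech X → ℝ := fun p => ((stoneCechExtend hhc p : Icc (0:ℝ) 1) : ℝ) with hF
  have hFc : Continuous F := continuous_subtype_val.comp (continuous_stoneCechExtend hhc)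
  have hFunit : ∀ z : X, F (stoneCechUnit z) = (1 + g z)⁻¹ := by
    intro z
    have h2 := congrFun (stoneCechExtend_extends hhc) z
    simp only [Function.comp_apply] at h2
    show ((stoneCechExtend hhc (stoneCechUnit z) : Icc (0:ℝ) 1) : ℝ) = (1 + g z)⁻¹
    rw [h2]
  -- the decreasing sequence of closed sets
  set T : ℕ → Set (StoneCech X) := fun m => closure (stoneCechUnit '' (x '' Ici m)) with hT
  have hTd : ∀ m, T (m + 1) ⊆ T m := fun m =>
    closure_mono (image_mono (image_mono (Ici_subset_Ici.mpr (Nat.le_succ m))))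
  have hTne : ∀ m, (T m).Nonempty := fun m =>
    ⟨stoneCechUnit (x m), subset_closure ⟨x m, ⟨m, le_refl m, rfl⟩, rfl⟩⟩
  have hTcl : ∀ m, IsClosed (T m) := fun m => isClosed_closure
  obtain ⟨p, hp⟩ := IsCompact.nonempty_iInter_of_sequence_nonempty_isCompact_isClosed T
    hTd hTne ((hTcl 0).isCompact) hTcl
  simp only [mem_iInter] at hp
  -- F p ≤ (1 + m)⁻¹ for all m
  have hFple : ∀ m : ℕ, F p ≤ (1 + (m : ℝ))⁻¹ := by
    intro m
    have h1 : F p ∈ closure (F '' (stoneCechUnit '' (x '' Ici m))) :=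
      (image_closure_subset_closure_image hFc) ⟨p, hp m, rfl⟩
    have h2 : F '' (stoneCechUnit '' (x '' Ici m)) ⊆ Iic ((1 + (m : ℝ))⁻¹) := by
      rintro - ⟨-, ⟨-, ⟨n, hnm, rfl⟩, rfl⟩, rfl⟩
      rw [hFunit]
      have : (1 : ℝ) + m ≤ 1 + g (x n) := by
        have := hgx n
        have : (m : ℝ) ≤ g (x n) := le_trans (by exact_mod_cast hnm) this
        linarith
      exact inv_anti₀ (by positivity) this
    have := closure_mono h2 h1
    rwa [closure_Iic] at this
  have hFp0 : F p = 0 := by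
    have hge : 0 ≤ F p := (stoneCechExtend hhc p).2.1
    by_contra hne0
    have hgt : 0 < F p := lt_of_le_of_ne hge (Ne.symm hne0)
    obtain ⟨m, hm⟩ := exists_nat_gt (F p)⁻¹
    have h2 : (1 : ℝ) + m ≤ (F p)⁻¹ := by
      have := inv_anti₀ hgt (hFple m)
      rwa [inv_inv] at this
    linarith
  -- p is in the closure of ι '' A
  have hpA : p ∈ closure (stoneCechUnit '' closure U) := by
    refine closure_mono ?_ (hp 0)
    exact image_mono (fun y ⟨n, _, hy⟩ => hy ▸ hUA (hxU n))
  have hph := hsub hpA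
  rw [hewitt, Set.mem_sInter] at hph
  have hmemC : p ∈ {q : StoneCech X | F q ≠ 0} := by
    apply hph
    refine ⟨⟨F, hFc, rfl⟩, ?_⟩
    rintro - ⟨z, rfl⟩
    simp only [mem_setOf_eq]
    rw [hFunit]
    exact inv_ne_zero (hpos z).ne'
  exact hmemC hFp0

/-- for a regular closed `A ⊆ X`, `cl_{βX} A ⊆ υX` iff `A` is pseudocompact. -/
theorem stmt2 (X : Type) [TopologicalSpace X] [T35Space X] (A : Set X)
    (hA : ∃ U : Set X, IsOpen U ∧ A = closure U) :
    closure (stoneCechUnit '' A) ⊆ hewitt X ↔ IsPseudocompactSpace A := by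
  obtain ⟨U, hU, rfl⟩ := hA
  exact ⟨aux_hard X U hU, aux_easy X (closure U)⟩
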